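/- Let f(s) = s·ln(1+s) and F(s) = ∫₀^s t·ln(1+t) dt for s ≥ 0, and set F̃(s) = (1/2)f(s)·s − F(s). Then F̃(s) > 0 for all s > 0, and for every σ > 3/2 there exist constants C̃ > 0 and r₀ > 0 such that f(s)^σ ≤ C̃ s^σ F̃(s) for all s ≥ r₀. -/

import Mathlib

open Real

lemma log_deriv_aux (t : ℝ) (h : (0:ℝ) < 1 + t) :
    HasDerivAt (fun t : ℝ => Real.log (1+t)) (1/(1+t)) t := by
  have := ((hasDerivAt_id t).const_add 1).log h.ne'
  simpa using this

lemma antideriv_aux (t : ℝ) (h : (0:ℝ) < 1 + t) :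
    HasDerivAt (fun t : ℝ => t^2/2 * Real.log (1+t) - t^2/4 + t/2 - (1/2) * Real.log (1+t))
      (t * Real.log (1+t)) t := by
  have hl := log_deriv_aux t h
  have h2 : HasDerivAt (fun t : ℝ => t^2/2) t t := by
    have := (hasDerivAt_pow 2 t).div_const 2
    norm_num at this
    exact this
  have h4 : HasDerivAt (fun t : ℝ => t^2/4) (t/2) t := by
    have := (hasDerivAt_pow 2 t).div_const 4
    norm_num at this
    exact this.congr_deriv (by ring)
  have h5 : HasDerivAt (fun t : ℝ => t/2) (1/2 : ℝ) t := (hasDerivAt_id t).div_const 2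
  have := (((h2.mul hl).sub h4).add h5).sub (hl.const_mul (1/2 : ℝ))
  refine this.congr_deriv ?_
  field_simp
  ring

lemma integral_eq (s : ℝ) (hs : 0 ≤ s) :
    (∫ t in (0:ℝ)..s, t * Real.log (1 + t))
      = s^2/2 * Real.log (1+s) - s^2/4 + s/2 - (1/2) * Real.log (1+s) := by
  have hd : ∀ t ∈ Set.uIcc (0:ℝ) s,
      HasDerivAt (fun t : ℝ => t^2/2 * Real.log (1+t) - t^2/4 + t/2 - (1/2) * Real.log (1+t))
        (t * Real.log (1+t)) t := by
    intro t ht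
    rw [Set.uIcc_of_le hs] at ht
    exact antideriv_aux t (by linarith [ht.1])
  have hint : IntervalIntegrable (fun t : ℝ => t * Real.log (1+t)) MeasureTheory.volume 0 s := by
    apply ContinuousOn.intervalIntegrable
    apply ContinuousOn.mul continuousOn_id
    apply ContinuousOn.log (by fun_prop)
    intro t ht
    rw [Set.uIcc_of_le hs] at ht
    have : (0:ℝ) < 1 + t := by linarith [ht.1]
    exact this.ne'
  rw [intervalIntegral.integral_eq_sub_of_hasDerivAt hd hint]
  simp [Real.log_one]

lemma g_pos (s : ℝ) (hs : 0 < s) : 0 < s^2/4 - s/2 + (1/2)*Real.log (1+s) := by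
  have hmono : StrictMonoOn (fun s : ℝ => s^2/4 - s/2 + (1/2)*Real.log (1+s)) (Set.Ici 0) := by
    apply strictMonoOn_of_deriv_pos (convex_Ici 0)
    · apply ContinuousOn.add (by fun_prop)
      apply ContinuousOn.mul continuousOn_const
      apply ContinuousOn.log (by fun_prop)
      intro t ht
      have : (0:ℝ) < 1 + t := by simp at ht; linarith
      exact this.ne'
    · intro x hx
      rw [interior_Ici] at hx
      have hx0 : (0:ℝ) < x := hx
      have h1 : (0:ℝ) < 1 + x := by linarith
      have hd : HasDerivAt (fun s : ℝ => s^2/4 - s/2 + (1/2)*Real.log (1+s))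
          (x/2 - 1/2 + (1/2)*(1/(1+x))) x := by
        have h4 : HasDerivAt (fun t : ℝ => t^2/4) (x/2) x := by
          have := (hasDerivAt_pow 2 x).div_const 4
          norm_num at this
          exact this.congr_deriv (by ring)
        have h5 : HasDerivAt (fun t : ℝ => t/2) (1/2 : ℝ) x := (hasDerivAt_id x).div_const 2
        exact (h4.sub h5).add ((log_deriv_aux x h1).const_mul (1/2 : ℝ))
      rw [hd.deriv]
      have heq : x/2 - 1/2 + (1/2)*(1/(1+x)) = x^2/(2*(1+x)) := by
        field_simp; ring
      rw [heq]
      positivity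
  have h0 : (0:ℝ) ∈ Set.Ici (0:ℝ) := Set.mem_Ici.mpr le_rfl
  have := hmono h0 (le_of_lt hs) hs
  simpa using this

theorem log_nonlinearity_satisfies_f4
    (f F Ftil : ℝ → ℝ)
    (hf : ∀ s, f s = s * Real.log (1 + s))
    (hF : ∀ s, F s = ∫ t in (0:ℝ)..s, t * Real.log (1 + t))
    (hFtil : ∀ s, Ftil s = (1 / 2) * f s * s - F s) :
    (∀ s > (0:ℝ), 0 < Ftil s) ∧
      ∀ σ > (3 / 2 : ℝ), ∃ C > (0:ℝ), ∃ r₀ > (0:ℝ),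
        ∀ s ≥ r₀, (f s) ^ σ ≤ C * s ^ σ * Ftil s := by
  have hFtil' : ∀ s : ℝ, 0 ≤ s → Ftil s = s^2/4 - s/2 + (1/2)*Real.log (1+s) := by
    intro s hs
    rw [hFtil, hf, hF, integral_eq s hs]
    ring
  constructor
  · intro s hs
    rw [hFtil' s hs.le]
    exact g_pos s hs
  · intro σ hσ
    have hσ0 : (0:ℝ) < σ := by linarith
    refine ⟨2 * σ ^ σ, by positivity, 8, by norm_num, ?_⟩
    intro s hs
    have hs0 : (0:ℝ) < s := by linarith
    have h1s : (0:ℝ) < 1 + s := by linarith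
    have hL : (0:ℝ) ≤ Real.log (1 + s) := Real.log_nonneg (by linarith)
    have hFt : Ftil s = s^2/4 - s/2 + (1/2)*Real.log (1+s) := hFtil' s hs0.le
    have hFts : s ≤ Ftil s := by
      rw [hFt]
      nlinarith
    -- key: log(1+s) ≤ σ * (1+s)^(1/σ)
    have hkey : Real.log (1+s) ≤ σ * (1+s) ^ (1/σ) := by
      have h := Real.log_le_sub_one_of_pos (Real.rpow_pos_of_pos h1s (1/σ)) |>.trans
        (by linarith [Real.rpow_pos_of_pos h1s (1/σ)] : (1+s) ^ (1/σ) - 1 ≤ (1+s) ^ (1/σ))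
      have hlog : Real.log ((1+s) ^ (1/σ)) = (1/σ) * Real.log (1+s) := Real.log_rpow h1s _
      rw [hlog] at h
      calc Real.log (1+s) = σ * ((1/σ) * Real.log (1+s)) := by field_simp
        _ ≤ σ * (1+s) ^ (1/σ) := by
            apply mul_le_mul_of_nonneg_left h hσ0.le
    have hLpow : Real.log (1+s) ^ σ ≤ σ ^ σ * (1+s) := by
      calc Real.log (1+s) ^ σ ≤ (σ * (1+s) ^ (1/σ)) ^ σ :=
            Real.rpow_le_rpow hL hkey hσ0.le
        _ = σ ^ σ * ((1+s) ^ (1/σ)) ^ σ := Real.mul_rpow hσ0.le (Real.rpow_pos_of_pos h1s _).le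
        _ = σ ^ σ * (1+s) := by
            rw [← Real.rpow_mul h1s.le, one_div, inv_mul_cancel₀ hσ0.ne', Real.rpow_one]
    have hmain : Real.log (1+s) ^ σ ≤ (2 * σ ^ σ) * Ftil s := by
      calc Real.log (1+s) ^ σ ≤ σ ^ σ * (1+s) := hLpow
        _ ≤ σ ^ σ * (2 * s) := by
            apply mul_le_mul_of_nonneg_left (by linarith) (Real.rpow_pos_of_pos hσ0 σ).le
        _ ≤ σ ^ σ * (2 * Ftil s) := by
            apply mul_le_mul_of_nonneg_left (by linarith) (Real.rpow_pos_of_pos hσ0 σ).le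
        _ = (2 * σ ^ σ) * Ftil s := by ring
    rw [hf, Real.mul_rpow hs0.le hL]
    calc s ^ σ * Real.log (1+s) ^ σ ≤ s ^ σ * ((2 * σ ^ σ) * Ftil s) := by
          apply mul_le_mul_of_nonneg_left hmain (Real.rpow_pos_of_pos hs0 σ).le
      _ = 2 * σ ^ σ * s ^ σ * Ftil s := by ring
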